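/- Let W, T be real symmetric n×n matrices with W positive definite, T invertible, and α > 0 such that αT + W is positive definite. If p is an eigenvector of Z^{(α)} = (αT+W)^{−1/2}(T − αW)(αT+W)^{−1/2} with eigenvalue τ, then setting p̃ = (αT+W)^{−1/2} p, the vector p̃ satisfies (1 − ατ)·T p̃ = (α + τ)·W p̃; consequently, if α + τ ≠ 0, then ξ = (1 − ατ)/(α + τ) is an eigenvalue of T⁻¹W with eigenvector p̃. -/

import Mathlib

open Matrix

open scoped ComplexOrder in
/-- The positive semidefinite square root of a positive semidefinite matrix
(the definition of `Matrix.PosSemidef.sqrt` in the older Mathlib, since removed). -/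
noncomputable def Matrix.PosSemidef.sqrt {n 𝕜 : Type*} [Fintype n] [RCLike 𝕜] [DecidableEq n]
    {A : Matrix n n 𝕜} (hA : A.PosSemidef) : Matrix n n 𝕜 :=
  hA.1.eigenvectorUnitary.1 * diagonal ((↑) ∘ (√·) ∘ hA.1.eigenvalues) *
  (star hA.1.eigenvectorUnitary : Matrix n n 𝕜)

open scoped ComplexOrder in
theorem Matrix.PosSemidef.sqrt_mul_self {n 𝕜 : Type*} [Fintype n] [RCLike 𝕜] [DecidableEq n]
    {A : Matrix n n 𝕜} (hA : A.PosSemidef) : hA.sqrt * hA.sqrt = A := by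
  unfold Matrix.PosSemidef.sqrt
  have hU := Unitary.coe_star_mul_self hA.1.eigenvectorUnitary
  conv_rhs => rw [hA.1.spectral_theorem, Unitary.conjStarAlgAut_apply]
  rw [show ∀ U D V : Matrix n n 𝕜, U * D * V * (U * D * V) = U * (D * (V * U) * D) * V by
    intro U D V; simp only [mul_assoc], hU, mul_one, diagonal_mul_diagonal]
  congr 2
  congr 1
  funext i
  simp only [Function.comp_apply]
  rw [← RCLike.ofReal_mul, Real.mul_self_sqrt (hA.eigenvalues_nonneg i)]

theorem stmt_19 {n : ℕ} (W T : Matrix (Fin n) (Fin n) ℝ)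
    (hW : W.PosDef) (hTsymm : T.IsSymm) (hTinv : IsUnit T)
    (α : ℝ) (hα : 0 < α) (hP : (α • T + W).PosDef)
    (τ : ℝ) (p : Fin n → ℝ) (hp : p ≠ 0)
    (heig : (hP.posSemidef.sqrt⁻¹ * (T - α • W) * hP.posSemidef.sqrt⁻¹) *ᵥ p = τ • p) :
    (1 - α * τ) • (T *ᵥ (hP.posSemidef.sqrt⁻¹ *ᵥ p)) =
        (α + τ) • (W *ᵥ (hP.posSemidef.sqrt⁻¹ *ᵥ p)) ∧
      hP.posSemidef.sqrt⁻¹ *ᵥ p ≠ 0 ∧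
      (α + τ ≠ 0 →
        (T⁻¹ * W) *ᵥ (hP.posSemidef.sqrt⁻¹ *ᵥ p) =
          ((1 - α * τ) / (α + τ)) • (hP.posSemidef.sqrt⁻¹ *ᵥ p)) := by
  set S := hP.posSemidef.sqrt with hSdef
  have hSS : S * S = α • T + W := hP.posSemidef.sqrt_mul_self
  have hSu : IsUnit S := by
    have h := hP.isUnit
    rw [← hSS, isUnit_iff_isUnit_det, det_mul] at h
    exact (isUnit_iff_isUnit_det S).2 (isUnit_of_mul_isUnit_left h)
  have hdet : IsUnit S.det := (isUnit_iff_isUnit_det S).1 hSu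
  have hSinv : S * S⁻¹ = 1 := mul_nonsing_inv S hdet
  have hSinv' : S⁻¹ * S = 1 := nonsing_inv_mul S hdet
  set q := S⁻¹ *ᵥ p with hq
  have hpq : p = S *ᵥ q := by
    rw [hq, mulVec_mulVec, hSinv, one_mulVec]
  have key : (T - α • W) *ᵥ q = τ • ((α • T + W) *ᵥ q) := by
    have h2 : S *ᵥ ((S⁻¹ * (T - α • W) * S⁻¹) *ᵥ p) = S *ᵥ (τ • p) := by rw [heig]
    rw [mulVec_mulVec, mulVec_smul, ← mul_assoc, ← mul_assoc, hSinv, one_mul] at h2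
    have hPS : (α • T + W) * S⁻¹ = S := by rw [← hSS, mul_assoc, hSinv, mul_one]
    show (T - α • W) *ᵥ (S⁻¹ *ᵥ p) = τ • ((α • T + W) *ᵥ (S⁻¹ *ᵥ p))
    rw [mulVec_mulVec, mulVec_mulVec, hPS, h2]
  have hq0 : q ≠ 0 := by
    intro h
    apply hp
    rw [hpq, h, mulVec_zero]
  have main : (1 - α * τ) • (T *ᵥ q) = (α + τ) • (W *ᵥ q) := by
    funext i
    have h := congrFun key i
    simp only [sub_mulVec, add_mulVec, smul_mulVec, Pi.smul_apply, Pi.sub_apply,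
      Pi.add_apply, smul_eq_mul] at h ⊢
    ring_nf at h ⊢
    linarith
  clear_value q
  refine ⟨main, hq0, fun hατ => ?_⟩
  have hTdet : IsUnit T.det := (isUnit_iff_isUnit_det T).1 hTinv
  have h4 : W *ᵥ q = (α + τ)⁻¹ • ((1 - α * τ) • (T *ᵥ q)) := by
    rw [main, smul_smul, inv_mul_cancel₀ hατ, one_smul]
  rw [← mulVec_mulVec, h4, mulVec_smul, mulVec_smul, mulVec_mulVec,
    nonsing_inv_mul T hTdet, one_mulVec, smul_smul, div_eq_inv_mul]
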